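/- Let σ be a positive definite density matrix in M_n(ℂ) and let K : M_n(ℂ) → M_n(ℂ) be a linear map commuting with Δ_σ(A) = σAσ⁻¹. If K is self-adjoint with respect to ⟨A,B⟩_f = Tr[σ A* f(Δ_σ)(B)] for some function f : (0,∞) → (0,∞) (evaluated by functional calculus on the positive operator Δ_σ), then K is self-adjoint with respect to ⟨·,·⟩_g for every function g : (0,∞) → (0,∞). -/

import Mathlib

open Matrix
open scoped ComplexOrder

/-- The functional calculus `f(Δ_σ)` for the modular operator `Δ_σ(A) = σ A σ⁻¹` of a
positive definite matrix `σ`, defined via the spectral decomposition of `σ`: if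
`σ = U diag(d) U*`, then `f(Δ_σ)(A) = U ((f(d_i/d_j))_{ij} ⊙ (U* A U)) U*`. -/
noncomputable def fDelta {n : ℕ} {σ : Matrix (Fin n) (Fin n) ℂ} (hσ : σ.PosDef)
    (f : ℝ → ℝ) (A : Matrix (Fin n) (Fin n) ℂ) : Matrix (Fin n) (Fin n) ℂ :=
  (hσ.1.eigenvectorUnitary : Matrix (Fin n) (Fin n) ℂ) *
    (Matrix.hadamard
      (Matrix.of fun i j => ((f (hσ.1.eigenvalues i / hσ.1.eigenvalues j) : ℝ) : ℂ))
      ((hσ.1.eigenvectorUnitary : Matrix (Fin n) (Fin n) ℂ)ᴴ * A *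
        (hσ.1.eigenvectorUnitary : Matrix (Fin n) (Fin n) ℂ))) *
    (hσ.1.eigenvectorUnitary : Matrix (Fin n) (Fin n) ℂ)ᴴ

noncomputable def Uc {n : ℕ} {σ : Matrix (Fin n) (Fin n) ℂ} (hσ : σ.PosDef) :
    Matrix (Fin n) (Fin n) ℂ := (hσ.1.eigenvectorUnitary : Matrix (Fin n) (Fin n) ℂ)

noncomputable def ev {n : ℕ} {σ : Matrix (Fin n) (Fin n) ℂ} (hσ : σ.PosDef) : Fin n → ℝ :=
  hσ.1.eigenvalues

variable {n : ℕ} {σ : Matrix (Fin n) (Fin n) ℂ} (hσ : σ.PosDef)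

lemma fDelta_eq (f : ℝ → ℝ) (A : Matrix (Fin n) (Fin n) ℂ) :
    fDelta hσ f A = Uc hσ *
      (Matrix.hadamard (Matrix.of fun i j => ((f (ev hσ i / ev hσ j) : ℝ) : ℂ))
        ((Uc hσ)ᴴ * A * Uc hσ)) * (Uc hσ)ᴴ := rfl

lemma hU1 : (Uc hσ)ᴴ * Uc hσ = 1 := by
  rw [Uc, ← star_eq_conjTranspose]
  exact Unitary.coe_star_mul_self hσ.1.eigenvectorUnitary

lemma hU2 : Uc hσ * (Uc hσ)ᴴ = 1 := by
  rw [Uc, ← star_eq_conjTranspose]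
  exact Unitary.coe_mul_star_self hσ.1.eigenvectorUnitary

lemma spec : σ = Uc hσ * diagonal (RCLike.ofReal ∘ ev hσ) * (Uc hσ)ᴴ := by
  rw [Uc, ev, ← star_eq_conjTranspose]; exact hσ.1.spectral_theorem

lemma trace_formula (f : ℝ → ℝ) (A B : Matrix (Fin n) (Fin n) ℂ) :
    (σ * Aᴴ * fDelta hσ f B).trace =
    ∑ p, ∑ q, (ev hσ p : ℂ) * ((f (ev hσ q / ev hσ p) : ℝ) : ℂ) *
      (starRingEnd ℂ) (((Uc hσ)ᴴ * A * Uc hσ) q p) * (((Uc hσ)ᴴ * B * Uc hσ) q p) := by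
  have key : σ * Aᴴ * fDelta hσ f B =
      Uc hσ * ((diagonal (RCLike.ofReal ∘ ev hσ) * ((Uc hσ)ᴴ * A * Uc hσ)ᴴ *
        (Matrix.hadamard (Matrix.of fun i j => ((f (ev hσ i / ev hσ j) : ℝ) : ℂ))
          ((Uc hσ)ᴴ * B * Uc hσ)))) * (Uc hσ)ᴴ := by
    have h0 : σ * Aᴴ * fDelta hσ f B =
        (Uc hσ * diagonal (RCLike.ofReal ∘ ev hσ) * (Uc hσ)ᴴ) * Aᴴ * fDelta hσ f B := by
      rw [← spec hσ]
    rw [h0, fDelta_eq]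
    simp only [conjTranspose_mul, conjTranspose_conjTranspose, Matrix.mul_assoc]
  rw [key, Matrix.trace_mul_cycle, ← Matrix.mul_assoc, hU1, Matrix.one_mul]
  rw [Matrix.trace]
  simp only [Matrix.diag_apply, Matrix.mul_apply, Matrix.diagonal_apply, Function.comp_apply,
    Matrix.conjTranspose_apply, Matrix.hadamard_apply, Matrix.of_apply,
    ite_mul, zero_mul, Finset.sum_ite_eq, Finset.mem_univ, if_pos]
  apply Finset.sum_congr rfl
  intro p _
  apply Finset.sum_congr rfl
  intro q _
  simp only [starRingEnd_apply]
  ac_rfl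


lemma rcoe (x : ℝ) : (RCLike.ofReal x : ℂ) = Complex.ofReal x := rfl

lemma evpos : ∀ i, 0 < ev hσ i := hσ.eigenvalues_pos

lemma evC_ne (i : Fin n) : ((ev hσ i : ℝ) : ℂ) ≠ 0 := by
  exact_mod_cast (evpos hσ i).ne'

lemma sigma_mul_U : σ * Uc hσ = Uc hσ * diagonal (RCLike.ofReal ∘ ev hσ) := by
  have h := congrArg (· * Uc hσ) (spec hσ)
  simpa [Matrix.mul_assoc, hU1] using h

lemma Uh_mul_sigma : (Uc hσ)ᴴ * σ = diagonal (RCLike.ofReal ∘ ev hσ) * (Uc hσ)ᴴ := by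
  have h := congrArg ((Uc hσ)ᴴ * ·) (spec hσ)
  simpa [← Matrix.mul_assoc, hU1] using h

lemma sigma_inv : σ⁻¹ = Uc hσ * diagonal (fun i => ((ev hσ i : ℝ) : ℂ)⁻¹) * (Uc hσ)ᴴ := by
  apply Matrix.inv_eq_left_inv
  rw [Matrix.mul_assoc, Matrix.mul_assoc, Uh_mul_sigma hσ, ← Matrix.mul_assoc,
    ← Matrix.mul_assoc, Matrix.mul_assoc (Uc hσ), Matrix.diagonal_mul_diagonal]
  have h1 : (fun i => ((ev hσ i : ℝ) : ℂ)⁻¹ * (RCLike.ofReal ∘ ev hσ) i) = fun _ => (1 : ℂ) := by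
    funext i
    simp only [Function.comp_apply]
    exact inv_mul_cancel₀ (evC_ne hσ i)
  rw [h1, Matrix.diagonal_one, Matrix.mul_one, hU2]

noncomputable def Em {n : ℕ} {σ : Matrix (Fin n) (Fin n) ℂ} (hσ : σ.PosDef) (r s : Fin n) :
    Matrix (Fin n) (Fin n) ℂ := Uc hσ * Matrix.single r s (1 : ℂ) * (Uc hσ)ᴴ

lemma Em_conj (r s : Fin n) : (Uc hσ)ᴴ * Em hσ r s * Uc hσ = Matrix.single r s 1 := by
  rw [Em, ← Matrix.mul_assoc, ← Matrix.mul_assoc, hU1,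
    Matrix.one_mul, Matrix.mul_assoc, hU1, Matrix.mul_one]

lemma diag_std (r s : Fin n) :
    diagonal (RCLike.ofReal ∘ ev hσ) * Matrix.single r s (1 : ℂ) *
      diagonal (fun i => ((ev hσ i : ℝ) : ℂ)⁻¹) =
    ((ev hσ r : ℂ) * ((ev hσ s : ℂ))⁻¹) • Matrix.single r s (1 : ℂ) := by
  ext i j
  simp only [Matrix.mul_diagonal, Matrix.diagonal_mul, Matrix.smul_apply,
    Matrix.single, Matrix.of_apply, Function.comp_apply, smul_eq_mul, rcoe]
  split_ifs with h
  · rw [← h.1, ← h.2]; ring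
  · ring

lemma sigma_Em (r s : Fin n) :
    σ * Em hσ r s * σ⁻¹ = ((ev hσ r : ℂ) * ((ev hσ s : ℂ))⁻¹) • Em hσ r s := by
  rw [sigma_inv hσ, Em]
  simp only [← Matrix.mul_assoc]
  rw [sigma_mul_U hσ, Matrix.mul_assoc _ ((Uc hσ)ᴴ) (Uc hσ), hU1, Matrix.mul_one]
  rw [Matrix.mul_assoc (Uc hσ), Matrix.mul_assoc (Uc hσ), diag_std hσ,
    Matrix.mul_smul, Matrix.smul_mul]

lemma conj_sandwich (M : Matrix (Fin n) (Fin n) ℂ) :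
    (Uc hσ)ᴴ * (σ * M * σ⁻¹) * Uc hσ =
    diagonal (RCLike.ofReal ∘ ev hσ) * ((Uc hσ)ᴴ * M * Uc hσ) *
      diagonal (fun i => ((ev hσ i : ℝ) : ℂ)⁻¹) := by
  rw [sigma_inv hσ]
  simp only [← Matrix.mul_assoc]
  rw [Uh_mul_sigma hσ, Matrix.mul_assoc _ ((Uc hσ)ᴴ) (Uc hσ), hU1, Matrix.mul_one]

lemma matrix_decomp (M : Matrix (Fin n) (Fin n) ℂ) :
    M = ∑ r, ∑ s, ((Uc hσ)ᴴ * M * Uc hσ) r s • Em hσ r s := by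
  have h2 : ∑ r, ∑ s, ((Uc hσ)ᴴ * M * Uc hσ) r s • Em hσ r s =
      Uc hσ * (∑ r, ∑ s, Matrix.single r s (((Uc hσ)ᴴ * M * Uc hσ) r s)) * (Uc hσ)ᴴ := by
    simp only [Em, Matrix.mul_sum, Matrix.sum_mul]
    apply Finset.sum_congr rfl; intro r _
    apply Finset.sum_congr rfl; intro s _
    rw [show Matrix.single r s (((Uc hσ)ᴴ * M * Uc hσ) r s) =
        ((Uc hσ)ᴴ * M * Uc hσ) r s • Matrix.single r s (1 : ℂ) by
      rw [Matrix.smul_single, smul_eq_mul, mul_one]]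
    rw [Matrix.mul_smul, Matrix.smul_mul]
  rw [h2, ← matrix_eq_sum_single, ← Matrix.mul_assoc, ← Matrix.mul_assoc, hU2,
    Matrix.one_mul, Matrix.mul_assoc, hU2, Matrix.mul_one]

section withK
variable (K : Matrix (Fin n) (Fin n) ℂ →ₗ[ℂ] Matrix (Fin n) (Fin n) ℂ)

lemma hsa_entry (f : ℝ → ℝ)
    (hsa : ∀ A B : Matrix (Fin n) (Fin n) ℂ,
      (σ * (K A)ᴴ * fDelta hσ f B).trace = (σ * Aᴴ * fDelta hσ f (K B)).trace)
    (p q r s : Fin n) :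
    ((ev hσ q : ℝ) : ℂ) * ((f (ev hσ p / ev hσ q) : ℝ) : ℂ) *
      (starRingEnd ℂ) (((Uc hσ)ᴴ * K (Em hσ r s) * Uc hσ) p q) =
    ((ev hσ s : ℝ) : ℂ) * ((f (ev hσ r / ev hσ s) : ℝ) : ℂ) *
      (((Uc hσ)ᴴ * K (Em hσ p q) * Uc hσ) r s) := by
  have h := hsa (Em hσ r s) (Em hσ p q)
  rw [trace_formula hσ f, trace_formula hσ f, Em_conj hσ p q, Em_conj hσ r s] at h
  simp only [Matrix.single, Matrix.of_apply, apply_ite (starRingEnd ℂ), _root_.map_one,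
    _root_.map_zero, mul_ite, mul_one, mul_zero, ite_mul, zero_mul, ite_and, Finset.sum_ite_eq,
    Finset.mem_univ, if_true] at h
  linear_combination h

lemma comm_entry (hcomm : ∀ A, K (σ * A * σ⁻¹) = σ * K A * σ⁻¹) (p q r s : Fin n) :
    ((ev hσ r : ℝ) : ℂ) * (((ev hσ s : ℝ) : ℂ))⁻¹ * (((Uc hσ)ᴴ * K (Em hσ r s) * Uc hσ) p q) =
    ((ev hσ p : ℝ) : ℂ) * (((ev hσ q : ℝ) : ℂ))⁻¹ * (((Uc hσ)ᴴ * K (Em hσ r s) * Uc hσ) p q) := by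
  have h := hcomm (Em hσ r s)
  rw [sigma_Em hσ, _root_.map_smul] at h
  have h2 := congrArg (fun M => ((Uc hσ)ᴴ * M * Uc hσ) p q) h
  beta_reduce at h2
  rw [conj_sandwich hσ (K (Em hσ r s))] at h2
  simp only [Matrix.smul_mul, Matrix.mul_smul, Matrix.smul_apply, smul_eq_mul,
    Matrix.mul_diagonal, Matrix.diagonal_mul, Function.comp_apply, rcoe] at h2
  linear_combination h2

lemma key_entry (f g : ℝ → ℝ) (hf : ∀ x : ℝ, 0 < x → 0 < f x)
    (hsa : ∀ A B : Matrix (Fin n) (Fin n) ℂ,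
      (σ * (K A)ᴴ * fDelta hσ f B).trace = (σ * Aᴴ * fDelta hσ f (K B)).trace)
    (hcomm : ∀ A, K (σ * A * σ⁻¹) = σ * K A * σ⁻¹) (p q r s : Fin n) :
    ((ev hσ q : ℝ) : ℂ) * ((g (ev hσ p / ev hσ q) : ℝ) : ℂ) *
      (starRingEnd ℂ) (((Uc hσ)ᴴ * K (Em hσ r s) * Uc hσ) p q) =
    ((ev hσ s : ℝ) : ℂ) * ((g (ev hσ r / ev hσ s) : ℝ) : ℂ) *
      (((Uc hσ)ᴴ * K (Em hσ p q) * Uc hσ) r s) := by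
  have hfne1 : ((f (ev hσ r / ev hσ s) : ℝ) : ℂ) ≠ 0 := by
    exact_mod_cast (hf _ (div_pos (evpos hσ r) (evpos hσ s))).ne'
  have hfne2 : ((f (ev hσ p / ev hσ q) : ℝ) : ℂ) ≠ 0 := by
    exact_mod_cast (hf _ (div_pos (evpos hσ p) (evpos hσ q))).ne'
  by_cases h0 : ((Uc hσ)ᴴ * K (Em hσ r s) * Uc hσ) p q = 0
  · have h1 := hsa_entry hσ K f hsa p q r s
    rw [h0, _root_.map_zero, mul_zero] at h1
    have h2 : ((Uc hσ)ᴴ * K (Em hσ p q) * Uc hσ) r s = 0 := by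
      rcases mul_eq_zero.mp h1.symm with h | h
      · rcases mul_eq_zero.mp h with h' | h'
        · exact absurd h' (evC_ne hσ s)
        · exact absurd h' hfne1
      · exact h
    rw [h0, h2, _root_.map_zero, mul_zero, mul_zero]
  · have hc := comm_entry hσ K hcomm p q r s
    have hrat : ((ev hσ r : ℝ) : ℂ) * (((ev hσ s : ℝ) : ℂ))⁻¹ =
        ((ev hσ p : ℝ) : ℂ) * (((ev hσ q : ℝ) : ℂ))⁻¹ := mul_right_cancel₀ h0 hc
    have hratR : ev hσ r / ev hσ s = ev hσ p / ev hσ q := by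
      have : ((ev hσ r / ev hσ s : ℝ) : ℂ) = ((ev hσ p / ev hσ q : ℝ) : ℂ) := by
        push_cast [div_eq_mul_inv]
        exact hrat
      exact_mod_cast this
    have hfe := hsa_entry hσ K f hsa p q r s
    rw [hratR] at hfe
    have hq : ((ev hσ q : ℝ) : ℂ) * (starRingEnd ℂ) (((Uc hσ)ᴴ * K (Em hσ r s) * Uc hσ) p q) =
        ((ev hσ s : ℝ) : ℂ) * (((Uc hσ)ᴴ * K (Em hσ p q) * Uc hσ) r s) := by
      apply mul_left_cancel₀ hfne2
      linear_combination hfe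
    rw [hratR]
    linear_combination ((g (ev hσ p / ev hσ q) : ℝ) : ℂ) * hq

end withK

lemma sum4_perm (F : Fin n → Fin n → Fin n → Fin n → ℂ) :
    ∑ p, ∑ q, ∑ r, ∑ s, F p q r s = ∑ p, ∑ q, ∑ r, ∑ s, F s r q p := by
  calc ∑ p, ∑ q, ∑ r, ∑ s, F p q r s
      = ∑ x : Fin n × Fin n × Fin n × Fin n, F x.1 x.2.1 x.2.2.1 x.2.2.2 := by
        simp [Fintype.sum_prod_type]
    _ = ∑ x : Fin n × Fin n × Fin n × Fin n, F x.2.2.2 x.2.2.1 x.2.1 x.1 :=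
        Fintype.sum_equiv
          ⟨fun x => (x.2.2.2, x.2.2.1, x.2.1, x.1), fun x => (x.2.2.2, x.2.2.1, x.2.1, x.1),
            fun _ => rfl, fun _ => rfl⟩ _ _ (fun _ => rfl)
    _ = ∑ p, ∑ q, ∑ r, ∑ s, F s r q p := by
        simp [Fintype.sum_prod_type]


/-- If `K` commutes with `Δ_σ` and is self-adjoint with respect to
`⟨A,B⟩_f = Tr[σ A* f(Δ_σ)(B)]` for some positive function `f`, then `K` is self-adjoint
with respect to `⟨·,·⟩_g` for every positive function `g`. -/
theorem selfAdjoint_f_implies_selfAdjoint_g {n : ℕ}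
    (σ : Matrix (Fin n) (Fin n) ℂ) (hσ : σ.PosDef) (hTr : σ.trace = 1)
    (K : Matrix (Fin n) (Fin n) ℂ →ₗ[ℂ] Matrix (Fin n) (Fin n) ℂ)
    (hcomm : ∀ A, K (σ * A * σ⁻¹) = σ * K A * σ⁻¹)
    (f : ℝ → ℝ) (hf : ∀ x : ℝ, 0 < x → 0 < f x)
    (hsa : ∀ A B : Matrix (Fin n) (Fin n) ℂ,
      (σ * (K A)ᴴ * fDelta hσ f B).trace = (σ * Aᴴ * fDelta hσ f (K B)).trace) :
    ∀ g : ℝ → ℝ, (∀ x : ℝ, 0 < x → 0 < g x) →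
      ∀ A B : Matrix (Fin n) (Fin n) ℂ,
        (σ * (K A)ᴴ * fDelta hσ g B).trace = (σ * Aᴴ * fDelta hσ g (K B)).trace := by
  intro g hg A B
  have hexp : ∀ M : Matrix (Fin n) (Fin n) ℂ, ∀ a b : Fin n,
      ((Uc hσ)ᴴ * K M * Uc hσ) a b =
      ∑ r, ∑ s, ((Uc hσ)ᴴ * M * Uc hσ) r s * (((Uc hσ)ᴴ * K (Em hσ r s) * Uc hσ) a b) := by
    intro M a b
    have h1 : K M = ∑ r, ∑ s, ((Uc hσ)ᴴ * M * Uc hσ) r s • K (Em hσ r s) := by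
      conv_lhs => rw [matrix_decomp hσ M]
      simp only [_root_.map_sum, _root_.map_smul]
    rw [h1]
    simp only [Matrix.mul_sum, Matrix.sum_mul, Matrix.mul_smul, Matrix.smul_mul,
      Matrix.sum_apply, Matrix.smul_apply, smul_eq_mul]
  rw [trace_formula hσ g (K A) B, trace_formula hσ g A (K B)]
  trans (∑ p, ∑ q, ∑ r, ∑ s,
      ((ev hσ s : ℝ) : ℂ) * ((g (ev hσ r / ev hσ s) : ℝ) : ℂ) *
        (((Uc hσ)ᴴ * K (Em hσ q p) * Uc hσ) r s) *
        (starRingEnd ℂ) (((Uc hσ)ᴴ * A * Uc hσ) r s) * (((Uc hσ)ᴴ * B * Uc hσ) q p))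
  · apply Finset.sum_congr rfl; intro p _
    apply Finset.sum_congr rfl; intro q _
    rw [hexp A q p]
    simp only [_root_.map_sum, _root_.map_mul, Finset.mul_sum, Finset.sum_mul]
    apply Finset.sum_congr rfl; intro r _
    apply Finset.sum_congr rfl; intro s _
    linear_combination ((starRingEnd ℂ) (((Uc hσ)ᴴ * A * Uc hσ) r s) *
        (((Uc hσ)ᴴ * B * Uc hσ) q p)) * key_entry hσ K f g hf hsa hcomm q p r s
  trans (∑ p, ∑ q, ∑ r, ∑ s,
      ((ev hσ p : ℝ) : ℂ) * ((g (ev hσ q / ev hσ p) : ℝ) : ℂ) *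
        (starRingEnd ℂ) (((Uc hσ)ᴴ * A * Uc hσ) q p) *
        (((Uc hσ)ᴴ * B * Uc hσ) r s) * (((Uc hσ)ᴴ * K (Em hσ r s) * Uc hσ) q p))
  · refine Eq.trans ?_ (sum4_perm (fun p q r s =>
      ((ev hσ p : ℝ) : ℂ) * ((g (ev hσ q / ev hσ p) : ℝ) : ℂ) *
        (starRingEnd ℂ) (((Uc hσ)ᴴ * A * Uc hσ) q p) *
        (((Uc hσ)ᴴ * B * Uc hσ) r s) * (((Uc hσ)ᴴ * K (Em hσ r s) * Uc hσ) q p))).symm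
    apply Finset.sum_congr rfl; intro p _
    apply Finset.sum_congr rfl; intro q _
    apply Finset.sum_congr rfl; intro r _
    apply Finset.sum_congr rfl; intro s _
    ring
  · apply Finset.sum_congr rfl; intro p _
    apply Finset.sum_congr rfl; intro q _
    rw [hexp B q p, Finset.mul_sum]
    apply Finset.sum_congr rfl; intro r _
    rw [Finset.mul_sum]
    apply Finset.sum_congr rfl; intro s _
    ring
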